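/- Let $g \ge 2$ and let $G$ be a group containing elements $\alpha_1,\dots,\alpha_{2g+1}, \alpha'$ such that: the element $T = \alpha_{2g+1} \alpha_{2g} \cdots \alpha_2 \alpha_1 \alpha_1 \alpha_2 \cdots \alpha_{2g} \alpha_{2g+1}$ satisfies $T \alpha_i T^{-1} = \alpha_i$ for every $1 \le i \le 2g$, and the element $S = \alpha_{2g} \cdots \alpha_2 \alpha_1 \alpha_1 \alpha_2 \cdots \alpha_{2g}$ satisfies $S \alpha' S^{-1} = \alpha_{2g+1}$. Then the sequence $(\alpha_{2g+1}, \alpha_{2g}, \dots, \alpha_2, \alpha_1, \alpha_1, \alpha_2, \dots, \alpha_{2g}, \alpha', \alpha_{2g+1}, \alpha_{2g}, \dots, \alpha_2, \alpha_1, \alpha_1, \alpha_2, \dots, \alpha_{2g}, \alpha')$ of length $8g+4$ is Hurwitz equivalent to the sequence $(\alpha_{2g+1}, \alpha_{2g}, \dots, \alpha_2, \alpha_1, \alpha_{2g+1}, \alpha_{2g}, \dots, \alpha_2, \alpha_1, \alpha_1, \alpha_2, \dots, \alpha_{2g}, \alpha_{2g+1}, \alpha_1, \alpha_2, \dots, \alpha_{2g},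 \alpha')$. -/

import Mathlib

/-- One elementary (Hurwitz) transformation of sequences in a group. -/
def HurwitzStep {G : Type*} [Group G] (s t : List G) : Prop :=
  ∃ (l₁ l₂ : List G) (x y : G),
    (s = l₁ ++ x :: y :: l₂ ∧ t = l₁ ++ (x * y * x⁻¹) :: x :: l₂) ∨
    (s = l₁ ++ x :: y :: l₂ ∧ t = l₁ ++ y :: (y⁻¹ * x * y) :: l₂)

/-- Hurwitz equivalence: finitely many elementary transformations. -/
def HurwitzEquiv {G : Type*} [Group G] : List G → List G → Prop :=
  Relation.ReflTransGen HurwitzStep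

/-- The sequence `a k, a (k-1), …, a m` (descending indices). -/
def seqDesc {G : Type*} (a : ℕ → G) (k m : ℕ) : List G :=
  (List.range (k + 1 - m)).map fun i => a (k - i)

/-- The sequence `a m, a (m+1), …, a k` (ascending indices). -/
def seqAsc {G : Type*} (a : ℕ → G) (m k : ℕ) : List G :=
  (List.range (k + 1 - m)).map fun i => a (m + i)

/-- The product `a k * a (k-1) * ⋯ * a m` (descending indices). -/
def prodDesc {G : Type*} [Group G] (a : ℕ → G) (k m : ℕ) : G :=
  ((List.range (k + 1 - m)).map fun i => a (k - i)).prod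

/-- The product `a m * a (m+1) * ⋯ * a k` (ascending indices). -/
def prodAsc {G : Type*} [Group G] (a : ℕ → G) (m k : ℕ) : G :=
  ((List.range (k + 1 - m)).map fun i => a (m + i)).prod

lemma hw_swap {G : Type*} [Group G] (pre suf : List G) (x y : G) :
    HurwitzEquiv (pre ++ x :: y :: suf) (pre ++ (x * y * x⁻¹) :: x :: suf) :=
  Relation.ReflTransGen.single ⟨pre, suf, x, y, Or.inl ⟨rfl, rfl⟩⟩

lemma hw_movLeft {G : Type*} [Group G] (L : List G) (y : G) (pre suf : List G) :
    HurwitzEquiv (pre ++ L ++ y :: suf) (pre ++ (L.prod * y * L.prod⁻¹) :: (L ++ suf)) := by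
  induction L generalizing pre with
  | nil => simp; exact Relation.ReflTransGen.refl
  | cons x L ih =>
    have h1 := ih (pre ++ [x])
    have h2 := hw_swap pre (L ++ suf) x (L.prod * y * L.prod⁻¹)
    refine Relation.ReflTransGen.trans
      (b := pre ++ x :: (L.prod * y * L.prod⁻¹) :: (L ++ suf)) (by simpa [HurwitzEquiv] using h1) ?_
    have : x * (L.prod * y * L.prod⁻¹) * x⁻¹ = (x :: L).prod * y * ((x :: L).prod)⁻¹ := by
      simp [mul_assoc]
    rw [this] at h2
    simpa [HurwitzEquiv] using h2

lemma hw_movMany {G : Type*} [Group G] (D X : List G) (pre suf : List G)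
    (h : ∀ d ∈ D, X.prod * d * X.prod⁻¹ = d) :
    HurwitzEquiv (pre ++ X ++ D ++ suf) (pre ++ D ++ X ++ suf) := by
  induction D generalizing pre with
  | nil => simp; exact Relation.ReflTransGen.refl
  | cons d D ih =>
    have h1 := hw_movLeft X d pre (D ++ suf)
    rw [h d (by simp)] at h1
    have h2 := ih (pre ++ [d]) (fun e he => h e (by simp [he]))
    refine Relation.ReflTransGen.trans (by simpa [HurwitzEquiv] using h1) (by simpa [HurwitzEquiv] using h2)

/-- Lemma 5.3 of the paper: assume
`T = α (2g+1) ⋯ α 1 α 1 ⋯ α (2g+1)` conjugates each `α i` (`1 ≤ i ≤ 2g`) to itself and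
`S = α (2g) ⋯ α 1 α 1 ⋯ α (2g)` conjugates `α'` to `α (2g+1)`. Then
`(α (2g+1), α (2g), …, α 1, α 1, …, α (2g), α', α (2g+1), α (2g), …, α 1, α 1, …, α (2g), α')`
is Hurwitz equivalent to
`(α (2g+1), α (2g), …, α 1, α (2g+1), α (2g), …, α 1, α 1, …, α (2g), α (2g+1), α 1, …, α (2g), α')`. -/
theorem statement9 {G : Type*} [Group G] (g : ℕ) (hg : 2 ≤ g) (α : ℕ → G) (α' : G)
    (hT : ∀ i, 1 ≤ i → i ≤ 2 * g →
      (α (2 * g + 1) * prodDesc α (2 * g) 1 * prodAsc α 1 (2 * g) * α (2 * g + 1)) * α i *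
        (α (2 * g + 1) * prodDesc α (2 * g) 1 * prodAsc α 1 (2 * g) * α (2 * g + 1))⁻¹ = α i)
    (hS : (prodDesc α (2 * g) 1 * prodAsc α 1 (2 * g)) * α' *
        (prodDesc α (2 * g) 1 * prodAsc α 1 (2 * g))⁻¹ = α (2 * g + 1)) :
    HurwitzEquiv
      ((α (2 * g + 1) :: (seqDesc α (2 * g) 1 ++ seqAsc α 1 (2 * g) ++ [α'])) ++
        (α (2 * g + 1) :: (seqDesc α (2 * g) 1 ++ seqAsc α 1 (2 * g) ++ [α'])))
      ((α (2 * g + 1) :: seqDesc α (2 * g) 1) ++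
        (α (2 * g + 1) :: seqDesc α (2 * g) 1) ++
        seqAsc α 1 (2 * g) ++ [α (2 * g + 1)] ++
        seqAsc α 1 (2 * g) ++ [α']) := by
  set β := α (2 * g + 1) with hβ
  set D := seqDesc α (2 * g) 1 with hD
  set A := seqAsc α 1 (2 * g) with hA
  have hpD : D.prod = prodDesc α (2 * g) 1 := rfl
  have hpA : A.prod = prodAsc α 1 (2 * g) := rfl
  -- Step 1: move α' left across D ++ A, becoming β
  have hc : (D ++ A).prod * α' * (D ++ A).prod⁻¹ = β := by
    rw [List.prod_append, hpD, hpA, mul_inv_rev]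
    calc prodDesc α (2 * g) 1 * prodAsc α 1 (2 * g) * α' *
        ((prodAsc α 1 (2 * g))⁻¹ * (prodDesc α (2 * g) 1)⁻¹)
        = (prodDesc α (2 * g) 1 * prodAsc α 1 (2 * g)) * α' *
          (prodDesc α (2 * g) 1 * prodAsc α 1 (2 * g))⁻¹ := by
          rw [mul_inv_rev]
      _ = β := hS
  have s1 := hw_movLeft (D ++ A) α' [β] (β :: (D ++ A ++ [α']))
  rw [hc] at s1
  -- Step 2: move D left across X = β :: (D ++ A ++ [β])
  have hXprod : (β :: (D ++ A ++ [β])).prod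
      = β * prodDesc α (2 * g) 1 * prodAsc α 1 (2 * g) * β := by
    simp [List.prod_append, ← hpD, ← hpA, mul_assoc]
  have hcomm : ∀ d ∈ D, (β :: (D ++ A ++ [β])).prod * d * ((β :: (D ++ A ++ [β])).prod)⁻¹ = d := by
    intro d hd
    rw [hD, seqDesc] at hd
    simp only [List.mem_map, List.mem_range] at hd
    obtain ⟨i, hi, rfl⟩ := hd
    rw [hXprod]
    exact hT (2 * g - i) (by omega) (by omega)
  have s2 := hw_movMany D (β :: (D ++ A ++ [β])) [β] (A ++ [α']) hcomm
  refine Relation.ReflTransGen.trans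
    (b := [β] ++ (β :: (D ++ A ++ [β])) ++ D ++ (A ++ [α'])) ?_ ?_
  · simpa [HurwitzEquiv] using s1
  · simpa [HurwitzEquiv] using s2
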